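/- Let 1 < p < 2 and let f: {-1,1}^n → {-1,0,1} satisfy Ê f(S) = 0 for all S with |S| < k. Then for all t > 0, E|P_t f|^p ≤ e^{-2tk(p-1)}·E|f|^p, where P_t f = ∑_S e^{-t|S|} f̂(S) W_S. -/

import Mathlib

open Finset


/-- Expectation with respect to the uniform measure on `{-1,1}^n` (modeled by `Fin n → Bool`). -/
noncomputable def cubeE (n : ℕ) (f : (Fin n → Bool) → ℝ) : ℝ := (∑ x, f x) / 2 ^ n

/-- The Walsh character `W_S(x) = ∏_{i ∈ S} x_i`. -/
noncomputable def walsh (n : ℕ) (S : Finset (Fin n)) (x : Fin n → Bool) : ℝ :=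
  ∏ i ∈ S, (if x i then (1 : ℝ) else -1)

/-- Fourier coefficient `f̂(S) = E[f · W_S]`. -/
noncomputable def cubeCoeff (n : ℕ) (f : (Fin n → Bool) → ℝ) (S : Finset (Fin n)) : ℝ :=
  cubeE n fun x => f x * walsh n S x

/-- The heat semigroup `P_t f = ∑_S e^{-t|S|} f̂(S) W_S`. -/
noncomputable def heat (n : ℕ) (t : ℝ) (f : (Fin n → Bool) → ℝ) : (Fin n → Bool) → ℝ :=
  fun x => ∑ S : Finset (Fin n), Real.exp (-t * S.card) * cubeCoeff n f S * walsh n S x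

/-- sgn as a function -/
noncomputable def sg (b : Bool) : ℝ := if b then 1 else -1

lemma walsh_eq (n : ℕ) (S : Finset (Fin n)) (x : Fin n → Bool) :
    walsh n S x = ∏ i : Fin n, (if i ∈ S then sg (x i) else 1) := by
  rw [walsh, Fintype.prod_ite_mem]
  rfl

lemma sum_pi_bool (n : ℕ) (g : Fin n → Bool → ℝ) :
    ∑ x : Fin n → Bool, ∏ i, g i (x i) = ∏ i, (g i true + g i false) := by
  rw [← Fintype.prod_sum]
  simp

lemma sum_walsh_mul (n : ℕ) (S T : Finset (Fin n)) :
    ∑ x : Fin n → Bool, walsh n S x * walsh n T x = if S = T then (2:ℝ)^n else 0 := by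
  have h : ∀ x : Fin n → Bool, walsh n S x * walsh n T x
      = ∏ i, ((if i ∈ S then sg (x i) else 1) * (if i ∈ T then sg (x i) else 1)) := by
    intro x
    rw [walsh_eq, walsh_eq, Finset.prod_mul_distrib]
  simp_rw [h]
  rw [sum_pi_bool n (fun i b => (if i ∈ S then sg b else 1) * (if i ∈ T then sg b else 1))]
  have hfac : ∀ i : Fin n,
      ((if i ∈ S then sg true else 1) * (if i ∈ T then sg true else 1)
      + (if i ∈ S then sg false else 1) * (if i ∈ T then sg false else 1))
      = if ((i ∈ S) ↔ (i ∈ T)) then 2 else 0 := by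
    intro i
    by_cases hS : i ∈ S <;> by_cases hT : i ∈ T <;> simp [hS, hT, sg] <;> norm_num
  simp_rw [hfac]
  by_cases hST : S = T
  · subst hST
    simp [Finset.prod_const]
  · have : ∃ i, ¬ ((i ∈ S) ↔ (i ∈ T)) := by
      by_contra hc
      push_neg at hc
      exact hST (Finset.ext fun i => (hc i))
    obtain ⟨i, hi⟩ := this
    rw [if_neg hST]
    exact Finset.prod_eq_zero (Finset.mem_univ i) (by rw [if_neg hi])

lemma walsh_mul_walsh (n : ℕ) (S : Finset (Fin n)) (x y : Fin n → Bool) :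
    walsh n S x * walsh n S y = ∏ i ∈ S, (sg (x i) * sg (y i)) := by
  rw [walsh, walsh, Finset.prod_mul_distrib]; rfl

/-- sum over all subsets of exp(-t|S|) W_S(x) W_S(y) equals the product kernel -/
lemma sum_exp_walsh (n : ℕ) (t : ℝ) (x y : Fin n → Bool) :
    ∑ S : Finset (Fin n), Real.exp (-t * S.card) * (walsh n S x * walsh n S y)
      = ∏ i : Fin n, (Real.exp (-t) * (sg (x i) * sg (y i)) + 1) := by
  rw [Fintype.prod_add]
  simp only [Finset.prod_const_one, mul_one]
  apply Finset.sum_congr rfl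
  intro S _
  rw [walsh_mul_walsh, show (-t * S.card : ℝ) = S.card * (-t) by ring, Real.exp_nat_mul,
    ← Finset.prod_const, ← Finset.prod_mul_distrib]

lemma delta_kernel (n : ℕ) (x y : Fin n → Bool) :
    ∑ S : Finset (Fin n), walsh n S x * walsh n S y
      = if x = y then (2:ℝ)^n else 0 := by
  have h := sum_exp_walsh n 0 x y
  simp only [neg_zero, zero_mul, Real.exp_zero, one_mul] at h
  rw [h]
  by_cases hxy : x = y
  · subst hxy
    rw [if_pos rfl]
    have : ∀ i : Fin n, sg (x i) * sg (x i) + 1 = 2 := by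
      intro i; cases x i <;> simp [sg] <;> norm_num
    simp_rw [this]
    simp
  · rw [if_neg hxy]
    have : ∃ i, x i ≠ y i := by
      by_contra hc; push_neg at hc; exact hxy (funext hc)
    obtain ⟨i, hi⟩ := this
    apply Finset.prod_eq_zero (Finset.mem_univ i)
    cases hx : x i <;> cases hy : y i <;> simp [hx, hy] at hi ⊢ <;> simp [sg] <;> norm_num

lemma inversion (n : ℕ) (f : (Fin n → Bool) → ℝ) (x : Fin n → Bool) :
    ∑ S : Finset (Fin n), cubeCoeff n f S * walsh n S x = f x := by
  simp only [cubeCoeff, cubeE]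
  have : ∀ S : Finset (Fin n), (∑ y, f y * walsh n S y) / 2 ^ n * walsh n S x
      = (∑ y, f y * (walsh n S x * walsh n S y)) / 2 ^ n := by
    intro S
    rw [div_mul_eq_mul_div, Finset.sum_mul]
    congr 1
    apply Finset.sum_congr rfl; intro y _; ring
  simp_rw [this, ← Finset.sum_div, Finset.sum_comm (γ := Finset (Fin n)), ← Finset.mul_sum,
    delta_kernel]
  have h2 : ∀ y, f y * (if x = y then (2:ℝ)^n else 0) = if y = x then f y * 2^n else 0 := by
    intro y
    by_cases h : x = y
    · subst h; simp
    · rw [if_neg h, if_neg (fun hh : y = x => h hh.symm), mul_zero]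
  simp_rw [h2]
  rw [Finset.sum_ite_eq' Finset.univ x (fun y => f y * 2^n)]
  simp only [Finset.mem_univ, if_true]
  field_simp

lemma parseval_sums (n : ℕ) (a b : Finset (Fin n) → ℝ) :
    ∑ x : Fin n → Bool, (∑ S, a S * walsh n S x) * (∑ S, b S * walsh n S x)
      = 2^n * ∑ S, a S * b S := by
  have h : ∀ x : Fin n → Bool, (∑ S, a S * walsh n S x) * (∑ S, b S * walsh n S x)
      = ∑ S, ∑ T, (a S * b T) * (walsh n S x * walsh n T x) := by
    intro x
    rw [Finset.sum_mul_sum]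
    exact Finset.sum_congr rfl fun S _ => Finset.sum_congr rfl fun T _ => by ring
  simp_rw [h]
  rw [Finset.sum_comm]
  have h2 : ∀ S : Finset (Fin n),
      ∑ x : Fin n → Bool, ∑ T, (a S * b T) * (walsh n S x * walsh n T x)
      = 2^n * (a S * b S) := by
    intro S
    rw [Finset.sum_comm]
    have h3 : ∀ T : Finset (Fin n),
        ∑ x : Fin n → Bool, (a S * b T) * (walsh n S x * walsh n T x)
        = if T = S then 2^n * (a S * b S) else 0 := by
      intro T
      rw [← Finset.mul_sum, sum_walsh_mul]
      by_cases h : S = T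
      · subst h; simp [mul_comm]
      · rw [if_neg h, if_neg (fun hh : T = S => h hh.symm), mul_zero]
    simp_rw [h3]
    rw [Finset.sum_ite_eq' Finset.univ S (fun _ => (2:ℝ)^n * (a S * b S))]
    simp
  simp_rw [h2, ← Finset.mul_sum]

lemma heat_kernel (n : ℕ) (t : ℝ) (f : (Fin n → Bool) → ℝ) (x : Fin n → Bool) :
    heat n t f x
      = (∑ y, f y * ∏ i : Fin n, (Real.exp (-t) * (sg (x i) * sg (y i)) + 1)) / 2^n := by
  simp only [heat, cubeCoeff, cubeE]
  have h : ∀ S : Finset (Fin n),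
      Real.exp (-t * S.card) * ((∑ y, f y * walsh n S y) / 2 ^ n) * walsh n S x
      = (∑ y, f y * (Real.exp (-t * S.card) * (walsh n S x * walsh n S y))) / 2^n := by
    intro S
    have h4 : ∑ y, f y * (Real.exp (-t * S.card) * (walsh n S x * walsh n S y))
        = Real.exp (-t * S.card) * (∑ y, f y * walsh n S y) * walsh n S x := by
      rw [Finset.mul_sum, Finset.sum_mul]
      exact Finset.sum_congr rfl fun y _ => by ring
    rw [h4]; ring
  simp_rw [h, ← Finset.sum_div, Finset.sum_comm (γ := Finset (Fin n)), ← Finset.mul_sum,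
    sum_exp_walsh]

lemma kernel_nonneg (n : ℕ) (t : ℝ) (ht : 0 ≤ t) (x y : Fin n → Bool) :
    (0:ℝ) ≤ ∏ i : Fin n, (Real.exp (-t) * (sg (x i) * sg (y i)) + 1) := by
  apply Finset.prod_nonneg
  intro i _
  have he : Real.exp (-t) ≤ 1 := by
    rw [show (1:ℝ) = Real.exp 0 by simp]
    exact Real.exp_le_exp.2 (by linarith)
  have : sg (x i) * sg (y i) = 1 ∨ sg (x i) * sg (y i) = -1 := by
    cases x i <;> cases y i <;> simp [sg] <;> norm_num
  rcases this with h | h <;> rw [h] <;> nlinarith [Real.exp_pos (-t)]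

lemma kernel_sum (n : ℕ) (t : ℝ) (y : Fin n → Bool) :
    ∑ x : Fin n → Bool, ∏ i : Fin n, (Real.exp (-t) * (sg (x i) * sg (y i)) + 1)
      = 2^n := by
  rw [sum_pi_bool n (fun i b => Real.exp (-t) * (sg b * sg (y i)) + 1)]
  have : ∀ i : Fin n, (Real.exp (-t) * (sg true * sg (y i)) + 1)
      + (Real.exp (-t) * (sg false * sg (y i)) + 1) = 2 := by
    intro i; cases y i <;> simp [sg] <;> ring
  simp_rw [this]
  simp

lemma l1_contraction (n : ℕ) (t : ℝ) (ht : 0 ≤ t) (f : (Fin n → Bool) → ℝ) :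
    ∑ x : Fin n → Bool, |heat n t f x| ≤ ∑ x, |f x| := by
  have hb : ∀ x : Fin n → Bool, |heat n t f x|
      ≤ (∑ y, |f y| * ∏ i : Fin n, (Real.exp (-t) * (sg (x i) * sg (y i)) + 1)) / 2^n := by
    intro x
    rw [heat_kernel]
    rw [abs_div, abs_of_pos (by positivity : (0:ℝ) < 2^n)]
    apply div_le_div_of_nonneg_right ?_ (by positivity)
    calc |∑ y, f y * ∏ i : Fin n, (Real.exp (-t) * (sg (x i) * sg (y i)) + 1)|
        ≤ ∑ y, |f y * ∏ i : Fin n, (Real.exp (-t) * (sg (x i) * sg (y i)) + 1)| :=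
          Finset.abs_sum_le_sum_abs _ _
      _ ≤ ∑ y, |f y| * ∏ i : Fin n, (Real.exp (-t) * (sg (x i) * sg (y i)) + 1) := by
          apply Finset.sum_le_sum
          intro y _
          rw [abs_mul, abs_of_nonneg (kernel_nonneg n t ht x y)]
  calc ∑ x : Fin n → Bool, |heat n t f x|
      ≤ ∑ x : Fin n → Bool,
          (∑ y, |f y| * ∏ i : Fin n, (Real.exp (-t) * (sg (x i) * sg (y i)) + 1)) / 2^n :=
        Finset.sum_le_sum fun x _ => hb x
    _ = ∑ x, |f x| := by
        rw [← Finset.sum_div, Finset.sum_comm]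
        have : ∀ y : Fin n → Bool,
            ∑ x : Fin n → Bool, |f y| * ∏ i : Fin n, (Real.exp (-t) * (sg (x i) * sg (y i)) + 1)
            = |f y| * 2^n := by
          intro y
          rw [← Finset.mul_sum, kernel_sum]
        simp_rw [this]
        rw [← Finset.sum_mul]
        field_simp

theorem stmt_11 (n k : ℕ) (p : ℝ) (hp1 : 1 < p) (hp2 : p < 2)
    (f : (Fin n → Bool) → ℝ) (hval : ∀ x, f x = -1 ∨ f x = 0 ∨ f x = 1)
    (hcoeff : ∀ S : Finset (Fin n), S.card < k → cubeCoeff n f S = 0)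
    (t : ℝ) (ht : 0 < t) :
    cubeE n (fun x => |heat n t f x| ^ p) ≤
      Real.exp (-2 * t * k * (p - 1)) * cubeE n (fun x => |f x| ^ p) := by
  classical
  have hp2p : (0:ℝ) < 2 - p := by linarith
  have hpp1 : (0:ℝ) < p - 1 := by linarith
  set G := heat n t f with hGdef
  have h2n : (0:ℝ) < 2^n := by positivity
  -- values of f
  have habs : ∀ x, |f x| ^ p = |f x| := by
    intro x
    rcases hval x with h | h | h <;> rw [h] <;>
      norm_num [Real.one_rpow, Real.zero_rpow (show p ≠ 0 by linarith)]
  have hsq : ∀ x, f x ^ 2 = |f x| := by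
    intro x
    rcases hval x with h | h | h <;> rw [h] <;> norm_num
  set Sf := ∑ x, |f x| with hSfdef
  have hSf0 : 0 ≤ Sf := Finset.sum_nonneg fun x _ => abs_nonneg _
  -- L1 contraction
  have hL1 : ∑ x, |G x| ≤ Sf := l1_contraction n t ht.le f
  have hG10 : 0 ≤ ∑ x, |G x| := Finset.sum_nonneg fun x _ => abs_nonneg _
  -- L2 bound
  have hG2 : ∑ x, G x ^ 2
      = 2^n * ∑ S, (Real.exp (-t*S.card) * cubeCoeff n f S)^2 := by
    have h := parseval_sums n (fun S => Real.exp (-t*S.card) * cubeCoeff n f S)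
      (fun S => Real.exp (-t*S.card) * cubeCoeff n f S)
    rw [hGdef]
    simpa [heat, sq, mul_assoc] using h
  have hf2 : ∑ x, f x ^ 2 = 2^n * ∑ S, (cubeCoeff n f S)^2 := by
    have h := parseval_sums n (cubeCoeff n f) (cubeCoeff n f)
    calc ∑ x, f x ^ 2
        = ∑ x, (∑ S, cubeCoeff n f S * walsh n S x) * (∑ S, cubeCoeff n f S * walsh n S x) := by
          apply Finset.sum_congr rfl
          intro x _
          rw [inversion, sq]
      _ = 2^n * ∑ S, (cubeCoeff n f S)^2 := by rw [h]; simp [sq]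
  have hterm : ∀ S : Finset (Fin n),
      (Real.exp (-t*S.card) * cubeCoeff n f S)^2
        ≤ Real.exp (-2*t*k) * (cubeCoeff n f S)^2 := by
    intro S
    by_cases hS : S.card < k
    · simp [hcoeff S hS]
    · push_neg at hS
      have he : Real.exp (-t*S.card)^2 = Real.exp (-2*t*S.card) := by
        rw [sq, ← Real.exp_add]; ring_nf
      rw [mul_pow, he]
      apply mul_le_mul_of_nonneg_right _ (sq_nonneg _)
      apply Real.exp_le_exp.2
      have hk : (k:ℝ) ≤ S.card := Nat.cast_le.2 hS
      nlinarith
  have hG2le : ∑ x, G x ^ 2 ≤ Real.exp (-2*t*k) * Sf := by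
    have h1 : ∑ x, G x ^ 2 ≤ Real.exp (-2*t*k) * ∑ x, f x ^ 2 := by
      rw [hG2, hf2]
      calc (2:ℝ)^n * ∑ S, (Real.exp (-t*S.card) * cubeCoeff n f S)^2
          ≤ 2^n * (Real.exp (-2*t*k) * ∑ S, (cubeCoeff n f S)^2) := by
            apply mul_le_mul_of_nonneg_left _ h2n.le
            rw [Finset.mul_sum]
            exact Finset.sum_le_sum fun S _ => hterm S
        _ = Real.exp (-2*t*k) * (2^n * ∑ S, (cubeCoeff n f S)^2) := by ring
    have h2 : ∑ x, f x ^ 2 = Sf := Finset.sum_congr rfl fun x _ => hsq x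
    rwa [h2] at h1
  have hG20 : 0 ≤ ∑ x, G x ^ 2 := Finset.sum_nonneg fun x _ => sq_nonneg _
  -- Hölder
  have hconj : Real.HolderConjugate (1/(2-p)) (1/(p-1)) := by
    constructor
    · rw [one_div, one_div, inv_inv, inv_inv, inv_one]; ring
    · exact one_div_pos.2 hp2p
    · exact one_div_pos.2 hpp1
  have holder := Real.inner_le_Lp_mul_Lq_of_nonneg (s := Finset.univ) hconj
      (f := fun x => |G x| ^ (2-p)) (g := fun x => |G x| ^ (2*(p-1)))
      (fun x _ => Real.rpow_nonneg (abs_nonneg _) _)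
      (fun x _ => Real.rpow_nonneg (abs_nonneg _) _)
  have hlhs : ∀ x : Fin n → Bool, |G x| ^ (2-p) * |G x| ^ (2*(p-1)) = |G x| ^ p := by
    intro x
    rw [← Real.rpow_add' (abs_nonneg _) (ne_of_gt (by linarith : (0:ℝ) < (2-p) + 2*(p-1)))]
    congr 1; ring
  have hfp : ∀ x : Fin n → Bool, (|G x| ^ (2-p)) ^ (1/(2-p)) = |G x| := by
    intro x
    rw [← Real.rpow_mul (abs_nonneg _), mul_one_div, div_self (ne_of_gt hp2p), Real.rpow_one]
  have hgq : ∀ x : Fin n → Bool, (|G x| ^ (2*(p-1))) ^ (1/(p-1)) = G x ^ 2 := by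
    intro x
    rw [← Real.rpow_mul (abs_nonneg _), mul_one_div]
    rw [show 2*(p-1)/(p-1) = (2:ℝ) by field_simp]
    rw [show ((2:ℝ) = ((2:ℕ):ℝ)) by norm_num, Real.rpow_natCast, sq_abs]
  simp_rw [hlhs, hfp, hgq, one_div_one_div] at holder
  -- chain
  have hchain : ∑ x, |G x| ^ p ≤ Real.exp (-2*t*k*(p-1)) * Sf := by
    calc ∑ x, |G x| ^ p
        ≤ (∑ x, |G x|) ^ (2-p) * (∑ x, G x ^ 2) ^ (p-1) := holder
      _ ≤ Sf ^ (2-p) * (Real.exp (-2*t*k) * Sf) ^ (p-1) := by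
          apply mul_le_mul
          · exact Real.rpow_le_rpow hG10 hL1 hp2p.le
          · exact Real.rpow_le_rpow hG20 hG2le hpp1.le
          · exact Real.rpow_nonneg hG20 _
          · exact Real.rpow_nonneg hSf0 _
      _ = Real.exp (-2*t*k*(p-1)) * Sf := by
          rw [Real.mul_rpow (Real.exp_pos _).le hSf0, ← Real.exp_mul]
          have hss : Sf ^ (2-p) * Sf ^ (p-1) = Sf := by
            rw [← Real.rpow_add' hSf0 (by norm_num : (2-p) + (p-1) ≠ 0),
              show (2-p) + (p-1) = (1:ℝ) by ring, Real.rpow_one]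
          calc Sf ^ (2-p) * (Real.exp (-2*t*↑k*(p-1)) * Sf ^ (p-1))
              = Real.exp (-2*t*↑k*(p-1)) * (Sf ^ (2-p) * Sf ^ (p-1)) := by ring
            _ = Real.exp (-2*t*↑k*(p-1)) * Sf := by rw [hss]
  -- finish
  simp only [cubeE]
  have hfsum : ∑ x, |f x| ^ p = Sf := Finset.sum_congr rfl fun x _ => habs x
  rw [hfsum, ← mul_div_assoc]
  exact div_le_div_of_nonneg_right hchain h2n.le
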